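/- Let a_n = Σ_{j=1}^n 1/j, X = {a_n : n ≥ 0}, T: X → X with Ta_n = a_{n+1}. Then for every x ∈ X and every ε > 0 there exists δ > 0 such that for all i, d(T^i x, T^{i+1} x) < ε + δ implies d(T^{i+1} x, T^{i+2} x) ≤ ε (i.e., condition (B2) holds), while condition (B1) fails: there exist x ∈ X and ε > 0 such that for every δ > 0 there exist i, j with d(T^i x, T^j x) < ε + δ and d(T^{i+1} x, T^{j+1} x) > ε. -/

import Mathlib

noncomputable def harm (n : ℕ) : ℝ := ∑ j ∈ Finset.range n, 1 / ((j : ℝ) + 1)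

lemma harm_succ (m : ℕ) : harm (m + 1) = harm m + 1 / ((m : ℝ) + 1) := by
  simp [harm, Finset.sum_range_succ]

lemma harm_mono : Monotone harm := by
  intro a b hab
  apply Finset.sum_le_sum_of_subset_of_nonneg (Finset.range_subset_range.2 hab)
  intro j _ _
  positivity

lemma dist_harm_succ (m : ℕ) : dist (harm m) (harm (m + 1)) = 1 / ((m : ℝ) + 1) := by
  rw [Real.dist_eq, harm_succ]
  rw [abs_sub_comm]
  have hp : (0:ℝ) < 1 / ((m:ℝ)+1) := by positivity
  rw [abs_of_nonneg (by linarith : (0:ℝ) ≤ harm m + 1 / ((m:ℝ)+1) - harm m)]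
  ring

lemma harm_unbounded : ∀ C : ℝ, ∃ j : ℕ, C < harm j := by
  intro C
  have h := Real.tendsto_sum_range_one_div_nat_succ_atTop
  have := (h.eventually_gt_atTop C).exists
  obtain ⟨j, hj⟩ := this
  exact ⟨j, by simpa [harm] using hj⟩

theorem stmt_14 :
    (∀ n : ℕ, ∀ ε > (0 : ℝ), ∃ δ > (0 : ℝ), ∀ i : ℕ,
      dist (harm (n + i)) (harm (n + i + 1)) < ε + δ →
      dist (harm (n + i + 1)) (harm (n + i + 2)) ≤ ε) ∧
    (∃ n : ℕ, ∃ ε > (0 : ℝ), ∀ δ > (0 : ℝ), ∃ i j : ℕ,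
      dist (harm (n + i)) (harm (n + j)) < ε + δ ∧
      dist (harm (n + i + 1)) (harm (n + j + 1)) > ε) := by
  constructor
  · intro n ε hε
    by_cases hε1 : 1 ≤ ε
    · refine ⟨1, one_pos, fun i _ => ?_⟩
      have : dist (harm (n + i + 1)) (harm (n + i + 2)) = 1 / ((n + i + 1 : ℕ) + 1) := by
        have := dist_harm_succ (n + i + 1)
        simpa using this
      rw [this]
      have h2 : (1:ℝ) ≤ ((n + i + 1 : ℕ) : ℝ) + 1 := le_add_of_nonneg_left (Nat.cast_nonneg _)
      calc (1:ℝ) / (((n + i + 1 : ℕ) : ℝ) + 1) ≤ 1 := by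
            rw [div_le_one (by positivity)]; exact h2
        _ ≤ ε := hε1
    · push_neg at hε1
      have h1 : (0:ℝ) < 1 - ε := by linarith
      refine ⟨ε ^ 2 / (1 - ε), by positivity, fun i hi => ?_⟩
      have hd1 : dist (harm (n + i)) (harm (n + i + 1)) = 1 / ((n + i : ℕ) + 1) :=
        dist_harm_succ (n + i)
      have hd2 : dist (harm (n + i + 1)) (harm (n + i + 2)) = 1 / ((n + i + 1 : ℕ) + 1) := by
        have := dist_harm_succ (n + i + 1); simpa using this
      rw [hd1] at hi
      rw [hd2]
      set k : ℝ := ((n + i : ℕ) : ℝ) with hk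
      have hk0 : (0:ℝ) ≤ k := Nat.cast_nonneg _
      have hkey : ε + ε ^ 2 / (1 - ε) = ε / (1 - ε) := by field_simp; ring
      rw [hkey] at hi
      rw [div_lt_div_iff₀ (by positivity) h1] at hi
      have hcast : ((n + i + 1 : ℕ) : ℝ) + 1 = k + 2 := by push_cast [hk]; ring
      rw [hcast, div_le_iff₀ (by positivity)]
      nlinarith
  · refine ⟨0, 1, one_pos, fun δ hδ => ?_⟩
    obtain ⟨i, hi⟩ := exists_nat_gt (2 / δ)
    have hi1 : (0:ℝ) < (i:ℝ) + 1 := by positivity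
    have hsmall : 1 / ((i:ℝ) + 1) < δ / 2 := by
      rw [div_lt_iff₀ hi1]
      have h2 : 2 / δ < (i:ℝ) + 1 := lt_trans hi (by linarith)
      rw [div_lt_iff₀ hδ] at h2
      nlinarith
    have hP : ∃ j : ℕ, harm i + 1 + 1 / ((i:ℝ) + 1) < harm j :=
      harm_unbounded _
    classical
    set j := Nat.find hP with hj
    have hjP : harm i + 1 + 1 / ((i:ℝ) + 1) < harm j := Nat.find_spec hP
    have hij : i < j := by
      by_contra h
      push_neg at h
      have := harm_mono h
      have hpos : (0:ℝ) < 1 / ((i:ℝ)+1) := by positivity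
      linarith
    have hj1 : 1 ≤ j := le_trans (Nat.one_le_iff_ne_zero.2 (by omega)) le_rfl
    have hjm : harm (j - 1) ≤ harm i + 1 + 1 / ((i:ℝ) + 1) := by
      by_contra h
      push_neg at h
      have h2 : Nat.find hP ≤ j - 1 := Nat.find_le h
      omega
    have hjs : harm j = harm (j - 1) + 1 / (((j - 1 : ℕ) : ℝ) + 1) := by
      have := harm_succ (j - 1)
      rwa [Nat.sub_add_cancel hj1] at this
    have hjle : 1 / (((j - 1 : ℕ) : ℝ) + 1) ≤ 1 / ((i:ℝ) + 1) := by
      apply one_div_le_one_div_of_le hi1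
      have : (i : ℝ) ≤ ((j - 1 : ℕ) : ℝ) := by exact_mod_cast Nat.le_sub_one_of_lt hij
      linarith
    have hub : harm j < harm i + 1 + δ := by
      rw [hjs]
      calc harm (j - 1) + 1 / (((j - 1 : ℕ) : ℝ) + 1)
          ≤ (harm i + 1 + 1 / ((i:ℝ) + 1)) + 1 / ((i:ℝ) + 1) := by linarith
        _ < harm i + 1 + δ := by linarith
    refine ⟨i, j, ?_, ?_⟩
    · have : dist (harm (0 + i)) (harm (0 + j)) = harm j - harm i := by
        simp only [Nat.zero_add]
        rw [Real.dist_eq, abs_sub_comm, abs_of_nonneg]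
        linarith
      rw [this]
      linarith
    · have hji : harm (j + 1) - harm (i + 1) > 1 := by
        rw [harm_succ j, harm_succ i]
        have hpos : (0:ℝ) < 1 / ((j:ℝ) + 1) := by positivity
        linarith
      have : dist (harm (0 + i + 1)) (harm (0 + j + 1)) = harm (j + 1) - harm (i + 1) := by
        simp only [Nat.zero_add]
        rw [Real.dist_eq, abs_sub_comm, abs_of_nonneg]
        linarith
      rw [this]
      exact hji
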